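/- Let k > 5 and let N be a natural number such that every 2-coloring of the 3-element subsets of {1,2,...,N−1} admits a homogeneous set A with |A| ≥ k and |A| > min A + 1. Then every regressive coloring of the 2-element subsets of {1,2,...,N−1} admits a min-homogeneous subset of size k. -/

import Mathlib

lemma triple_card_three {x y z : ℕ} (hxy : x < y) (hyz : y < z) :
    ({x, y, z} : Finset ℕ).card = 3 := by
  rw [Finset.card_insert_of_notMem (by simp; omega),
      Finset.card_insert_of_notMem (by simp; omega), Finset.card_singleton]

theorem regressive_from_PH_triples (k N : ℕ) (hk : 5 < k)
    (hPH : ∀ col : Finset ℕ → Bool,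
      ∃ A : Finset ℕ, A ⊆ Finset.Icc 1 (N - 1) ∧ k ≤ A.card ∧
        (∃ hA : A.Nonempty, A.min' hA + 1 < A.card) ∧
        ∃ b : Bool, ∀ t : Finset ℕ, t ⊆ A → t.card = 3 → col t = b) :
    ∀ c : ℕ → ℕ → ℕ,
      (∀ m n, m ∈ Finset.Icc 1 (N - 1) → n ∈ Finset.Icc 1 (N - 1) → m < n →
        c m n < m) →
      ∃ B : Finset ℕ, B ⊆ Finset.Icc 1 (N - 1) ∧ B.card = k ∧
        ∀ m n n', m ∈ B → n ∈ B → n' ∈ B → m < n → m < n' → c m n = c m n' := by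
  intro c hc
  obtain ⟨A, hAsub, hAcard, ⟨hA, hmin⟩, b, hb⟩ :=
    hPH (fun t => decide (∀ x ∈ t, ∀ y ∈ t, ∀ z ∈ t, x < y → y < z → c x y = c x z))
  have hsub3 : ∀ x ∈ A, ∀ y ∈ A, ∀ z ∈ A, ({x, y, z} : Finset ℕ) ⊆ A := by
    intro x hx y hy z hz a ha
    simp only [Finset.mem_insert, Finset.mem_singleton] at ha
    rcases ha with rfl | rfl | rfl <;> assumption
  cases b with
  | false =>
    exfalso
    have key : ∀ x ∈ A, ∀ y ∈ A, ∀ z ∈ A, x < y → y < z → c x y ≠ c x z := by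
      intro x hx y hy z hz hxy hyz heq
      have := hb {x, y, z} (hsub3 x hx y hy z hz) (triple_card_three hxy hyz)
      simp only [decide_eq_false_iff_not] at this
      apply this
      intro a ha b' hb' d hd hab hbd
      simp only [Finset.mem_insert, Finset.mem_singleton] at ha hb' hd
      rcases ha with rfl | rfl | rfl <;> rcases hb' with rfl | rfl | rfl <;>
        rcases hd with rfl | rfl | rfl <;> first | exact heq | omega
    set m := A.min' hA with hm
    have hmA : m ∈ A := A.min'_mem hA
    have hmlt : ∀ y ∈ A.erase m, m < y := by
      intro y hy
      exact lt_of_le_of_ne (A.min'_le y (Finset.mem_of_mem_erase hy))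
        (Ne.symm (Finset.ne_of_mem_erase hy))
    have hinj : Set.InjOn (c m) (A.erase m) := by
      intro y hy z hz heq
      rw [Finset.mem_coe] at hy hz
      by_contra hne
      rcases lt_or_gt_of_ne hne with h | h
      · exact key m hmA y (Finset.mem_of_mem_erase hy) z (Finset.mem_of_mem_erase hz)
          (hmlt y hy) h heq
      · exact key m hmA z (Finset.mem_of_mem_erase hz) y (Finset.mem_of_mem_erase hy)
          (hmlt z hz) h heq.symm
    have himg : (A.erase m).image (c m) ⊆ Finset.range m := by
      intro v hv
      simp only [Finset.mem_image] at hv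
      obtain ⟨y, hy, rfl⟩ := hv
      exact Finset.mem_range.mpr
        (hc m y (hAsub hmA) (hAsub (Finset.mem_of_mem_erase hy)) (hmlt y hy))
    have hle := Finset.card_le_card himg
    rw [Finset.card_image_of_injOn hinj, Finset.card_erase_of_mem hmA,
      Finset.card_range] at hle
    omega
  | true =>
    obtain ⟨B, hBA, hBcard⟩ := Finset.exists_subset_card_eq hAcard
    refine ⟨B, hBA.trans hAsub, hBcard, ?_⟩
    have htrip : ∀ x ∈ A, ∀ y ∈ A, ∀ z ∈ A, x < y → y < z → c x y = c x z := by
      intro x hx y hy z hz hxy hyz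
      have := hb {x, y, z} (hsub3 x hx y hy z hz) (triple_card_three hxy hyz)
      simp only [decide_eq_true_eq] at this
      exact this x (by simp) y (by simp) z (by simp) hxy hyz
    intro m n n' hm hn hn' hmn hmn'
    rcases eq_or_ne n n' with rfl | hne
    · rfl
    rcases lt_or_gt_of_ne hne with h | h
    · exact htrip m (hBA hm) n (hBA hn) n' (hBA hn') hmn h
    · exact (htrip m (hBA hm) n' (hBA hn') n (hBA hn) hmn' h).symm
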